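/- arXiv:2305.11680 — 3 statements merged into one kernel-verified Lean document; each statement's English description precedes it below -/
import Mathlib

section
/- Let F = P_{ℓ_1} ∪ (⋃_{j=1}^q S_{a_j}) with ℓ_1 ≥ 2, q ≥ 1, and a_j ≥ max{3, ℓ_1 − 1} for every j ∈ [q]. Let n = q + d(ℓ_1 − 1) + r with d ≥ 0 and 0 ≤ r < ℓ_1 − 1. Then the graph G_2(n, q, ℓ_1) = K_q ∨ (dK_{ℓ_1−1} ∪ K_r) contains no subgraph isomorphic to F. -/
open SimpleGraph Finset

/-- `G` contains a copy of `H` (a subgraph isomorphic to `H`). -/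
def ContainsCopy {V W : Type*} (H : SimpleGraph W) (G : SimpleGraph V) : Prop :=
  ∃ f : H →g G, Function.Injective f

/-- `G` is `H`-free: it contains no subgraph isomorphic to `H`. -/
def IsFree {V W : Type*} (H : SimpleGraph W) (G : SimpleGraph V) : Prop :=
  ¬ ContainsCopy H G

/-- The Turán number `ex(n, H)`: the maximum number of edges of an `H`-free
graph on `n` vertices. -/
noncomputable def exNum {W : Type*} (n : ℕ) (H : SimpleGraph W) : ℕ :=
  sSup {m | ∃ G : SimpleGraph (Fin n), IsFree H G ∧ G.edgeSet.ncard = m}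

/-- `G` is an extremal (`H`-free with `ex(n,H)` edges) graph on `n` vertices. -/
def IsExtremal {W : Type*} (n : ℕ) (H : SimpleGraph W) (G : SimpleGraph (Fin n)) : Prop :=
  IsFree H G ∧ G.edgeSet.ncard = exNum n H

/-- Disjoint union of an indexed family of graphs. -/
def sigmaUnion {ι : Type*} {V : ι → Type*} (G : ∀ i, SimpleGraph (V i)) :
    SimpleGraph (Σ i, V i) where
  Adj x y := ∃ (i : ι) (u v : V i), (G i).Adj u v ∧ x = ⟨i, u⟩ ∧ y = ⟨i, v⟩
  symm := by
    constructor
    rintro x y ⟨i, u, v, h, rfl, rfl⟩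
    exact ⟨i, v, u, h.symm, rfl, rfl⟩
  loopless := by
    constructor
    rintro x ⟨i, u, v, h, rfl, he⟩
    simp only [Sigma.mk.inj_iff, heq_eq_eq, true_and] at he
    exact (G i).loopless.irrefl u (he ▸ h)

/-- Disjoint union of two graphs on the sum type. -/
def dUnion {α β : Type*} (G : SimpleGraph α) (H : SimpleGraph β) :
    SimpleGraph (α ⊕ β) where
  Adj x y := Sum.LiftRel G.Adj H.Adj x y
  symm := by
    constructor
    rintro x y (h | h)
    · exact Sum.LiftRel.inl h.symm
    · exact Sum.LiftRel.inr h.symm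
  loopless := by
    constructor
    rintro x (h | h)
    · exact G.loopless.irrefl _ h
    · exact H.loopless.irrefl _ h

/-- The join `G ∨ H` of two graphs: disjoint union plus all edges in between. -/
def joinG {α β : Type*} (G : SimpleGraph α) (H : SimpleGraph β) :
    SimpleGraph (α ⊕ β) where
  Adj x y := match x, y with
    | .inl u, .inl v => G.Adj u v
    | .inr u, .inr v => H.Adj u v
    | .inl _, .inr _ => True
    | .inr _, .inl _ => True
  symm := by
    constructor
    rintro (u | u) (v | v) h
    · exact h.symm
    · trivial
    · trivial
    · exact h.symm
  loopless := by
    constructor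
    rintro (u | u) h
    · exact G.loopless.irrefl _ h
    · exact H.loopless.irrefl _ h

/-- The star `S_a` with `a` edges (`a + 1` vertices), centered at `0`. -/
def starGraph (a : ℕ) : SimpleGraph (Fin (a + 1)) where
  Adj x y := x ≠ y ∧ (x = 0 ∨ y = 0)
  symm := ⟨fun _ _ ⟨h1, h2⟩ => ⟨h1.symm, h2.symm⟩⟩
  loopless := ⟨fun _ h => h.1 rfl⟩

/-- The matching `M_k`: `(k/2) K_2` if `k` is even, `((k-1)/2) K_2 ∪ K_1` if `k` is odd. -/
def matchingGraph (k : ℕ) : SimpleGraph (Fin k) where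
  Adj x y := x ≠ y ∧ (x : ℕ) / 2 = (y : ℕ) / 2
  symm := ⟨fun _ _ ⟨h1, h2⟩ => ⟨h1.symm, h2.symm⟩⟩
  loopless := ⟨fun _ h => h.1 rfl⟩

/-- `k` disjoint copies of the graph `G`. -/
def kCopies {α : Type*} (k : ℕ) (G : SimpleGraph α) : SimpleGraph (Σ _ : Fin k, α) :=
  sigmaUnion fun _ => G

/-- The linear forest `⋃_{i=1}^p P_{ℓ i}`. -/
def pathForest (p : ℕ) (ℓ : Fin p → ℕ) : SimpleGraph (Σ i, Fin (ℓ i)) :=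
  sigmaUnion fun i => pathGraph (ℓ i)

/-- The star forest `⋃_{j=1}^q S_{a j}`. -/
def starForest (q : ℕ) (a : Fin q → ℕ) : SimpleGraph (Σ j, Fin (a j + 1)) :=
  sigmaUnion fun j => starGraph (a j)

/-- The path-star forest `(⋃_{i=1}^p P_{ℓ i}) ∪ (⋃_{j=1}^q S_{a j})`. -/
def pathStarForest (p q : ℕ) (ℓ : Fin p → ℕ) (a : Fin q → ℕ) :
    SimpleGraph ((Σ i, Fin (ℓ i)) ⊕ (Σ j, Fin (a j + 1))) :=
  dUnion (pathForest p ℓ) (starForest q a)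

/-- `δ_F = Σ_i ⌊ℓ_i / 2⌋`. -/
def deltaF (p : ℕ) (ℓ : Fin p → ℕ) : ℕ := ∑ i, ℓ i / 2

/-- `μ_F = 1` if (`p = 1` and `ℓ_1` even) or (`p ≥ 2` and some `ℓ_i ≠ 3`), else `1/2`. -/
def muF (p : ℕ) (ℓ : Fin p → ℕ) : ℚ :=
  if (p = 1 ∧ ∀ i, Even (ℓ i)) ∨ (2 ≤ p ∧ ∃ i, ℓ i ≠ 3) then 1 else 1/2

/-- `β_F = q + δ_F − μ_F`. -/
def betaF (p q : ℕ) (ℓ : Fin p → ℕ) : ℚ :=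
  (q : ℚ) + (deltaF p ℓ : ℚ) - muF p ℓ

/-- `G_1(n,k) = K_k ∨ K̄_{n-k}`. -/
def g1 (n k : ℕ) : SimpleGraph (Fin k ⊕ Fin (n - k)) :=
  joinG (⊤ : SimpleGraph (Fin k)) (⊥ : SimpleGraph (Fin (n - k)))

/-- `G_1⁺(n,k) = K_k ∨ (K_2 ∪ K̄_{n-k-2})`. -/
def g1plus (n k : ℕ) : SimpleGraph (Fin k ⊕ (Fin 2 ⊕ Fin (n - k - 2))) :=
  joinG (⊤ : SimpleGraph (Fin k))
    (dUnion (⊤ : SimpleGraph (Fin 2)) (⊥ : SimpleGraph (Fin (n - k - 2))))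

/-- `G_2(n,k,ℓ) = K_k ∨ (d K_{ℓ-1} ∪ K_r)` where `n = k + d(ℓ-1) + r`. -/
def g2 (k d ℓ r : ℕ) :
    SimpleGraph (Fin k ⊕ ((Σ _ : Fin d, Fin (ℓ - 1)) ⊕ Fin r)) :=
  joinG (⊤ : SimpleGraph (Fin k))
    (dUnion (kCopies d (⊤ : SimpleGraph (Fin (ℓ - 1)))) (⊤ : SimpleGraph (Fin r)))

/-- `G(s) = K_q ∨ ( (d-s-1) K_{ℓ-1} ∪ ( K_{(ℓ-2)/2} ∨ K̄_{ℓ/2 + s(ℓ-1) + r} ) )`. -/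
def gS (q ℓ d r s : ℕ) :
    SimpleGraph (Fin q ⊕ ((Σ _ : Fin (d - s - 1), Fin (ℓ - 1)) ⊕
      (Fin ((ℓ - 2) / 2) ⊕ Fin (ℓ / 2 + s * (ℓ - 1) + r)))) :=
  joinG (⊤ : SimpleGraph (Fin q))
    (dUnion (kCopies (d - s - 1) (⊤ : SimpleGraph (Fin (ℓ - 1))))
      (joinG (⊤ : SimpleGraph (Fin ((ℓ - 2) / 2)))
        (⊥ : SimpleGraph (Fin (ℓ / 2 + s * (ℓ - 1) + r)))))



/-- Cell labeling of the non-`K_q` part of `G₂`. -/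
def cellFn (d t r : ℕ) : (Σ _ : Fin d, Fin t) ⊕ Fin r → Fin d ⊕ Unit :=
  Sum.elim (fun x => Sum.inl x.1) (fun _ => Sum.inr ())

theorem adj_cell {d t r : ℕ} {x y : (Σ _ : Fin d, Fin t) ⊕ Fin r}
    (h : (dUnion (kCopies d (⊤ : SimpleGraph (Fin t))) (⊤ : SimpleGraph (Fin r))).Adj x y) :
    cellFn d t r x = cellFn d t r y := by
  cases h with
  | inl h =>
    obtain ⟨i, u, v, -, rfl, rfl⟩ := h
    rfl
  | inr h => rfl

theorem inj_bound {d t r m : ℕ} (hm : 0 < m)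
    (g : Fin m → (Σ _ : Fin d, Fin t) ⊕ Fin r) (hg : Function.Injective g)
    (hc : ∀ v w, cellFn d t r (g v) = cellFn d t r (g w)) : m ≤ max t r := by
  rcases h0 : g ⟨0, hm⟩ with ⟨i, u⟩ | u
  · have hall : ∀ v, ∃ u, g v = Sum.inl ⟨i, u⟩ := by
      intro v
      have hcv := hc v ⟨0, hm⟩
      rw [h0] at hcv
      rcases hv : g v with ⟨i', u'⟩ | u'
      · rw [hv] at hcv
        simp only [cellFn, Sum.elim_inl, Sum.inl.injEq] at hcv
        exact ⟨u', by rw [hcv]⟩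
      · rw [hv] at hcv
        simp [cellFn] at hcv
    choose h hh using hall
    have hinj : Function.Injective h := fun v w e => hg (by rw [hh v, hh w, e])
    have := Fintype.card_le_of_injective h hinj
    simpa using le_max_of_le_left (by simpa using this)
  · have hall : ∀ v, ∃ u, g v = Sum.inr u := by
      intro v
      have hcv := hc v ⟨0, hm⟩
      rw [h0] at hcv
      rcases hv : g v with ⟨i', u'⟩ | u'
      · rw [hv] at hcv
        simp [cellFn] at hcv
      · exact ⟨u', rfl⟩
    choose h hh using hall
    have hinj : Function.Injective h := fun v w e => hg (by rw [hh v, hh w, e])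
    have := Fintype.card_le_of_injective h hinj
    simpa using le_max_of_le_right (by simpa using this)

theorem g2_is_free (ℓ₁ q n d r : ℕ) (a : Fin q → ℕ)
    (hℓ : 2 ≤ ℓ₁) (hq : 1 ≤ q)
    (ha : ∀ j, max 3 (ℓ₁ - 1) ≤ a j)
    (hn : n = q + d * (ℓ₁ - 1) + r) (hr : r < ℓ₁ - 1) :
    IsFree (pathStarForest 1 q (fun _ => ℓ₁) a) (g2 q d ℓ₁ r) := by
  rintro ⟨f, hf⟩
  -- extracting cell-equality from adjacency mapped into the non-K_q part
  have cellAdj : ∀ {x y : (Σ _ : Fin 1, Fin ((fun _ => ℓ₁) 0)) ⊕ (Σ j, Fin (a j + 1))}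
      {u v : (Σ _ : Fin d, Fin (ℓ₁ - 1)) ⊕ Fin r},
      (pathStarForest 1 q (fun _ => ℓ₁) a).Adj x y →
      f x = Sum.inr u → f y = Sum.inr v →
      cellFn d (ℓ₁ - 1) r u = cellFn d (ℓ₁ - 1) r v := by
    intro x y u v h hu hv
    have hadj := f.map_adj h
    rw [hu, hv] at hadj
    exact adj_cell hadj
  -- the path component must use a K_q vertex
  have pathW : ∃ v : Fin ℓ₁, ∃ w : Fin q, f (Sum.inl ⟨0, v⟩) = Sum.inl w := by
    by_contra hcon
    push_neg at hcon
    have hex : ∀ v : Fin ℓ₁, ∃ u, f (Sum.inl ⟨0, v⟩) = Sum.inr u := by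
      intro v
      rcases hfv : f (Sum.inl ⟨0, v⟩) with w | u
      · exact absurd hfv (hcon v w)
      · exact ⟨u, rfl⟩
    choose g hg using hex
    have step : ∀ k (hk : k + 1 < ℓ₁),
        cellFn d (ℓ₁ - 1) r (g ⟨k, by omega⟩) = cellFn d (ℓ₁ - 1) r (g ⟨k + 1, hk⟩) := by
      intro k hk
      refine cellAdj ?_ (hg _) (hg _)
      exact Sum.LiftRel.inl ⟨0, ⟨k, by show k < ℓ₁; omega⟩, ⟨k + 1, hk⟩,
        pathGraph_adj.mpr (Or.inl rfl), rfl, rfl⟩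
    have const : ∀ k (hk : k < ℓ₁),
        cellFn d (ℓ₁ - 1) r (g ⟨k, hk⟩) = cellFn d (ℓ₁ - 1) r (g ⟨0, by omega⟩) := by
      intro k
      induction k with
      | zero => intro hk; rfl
      | succ n ih => intro hk; rw [← step n hk]; exact ih (by omega)
    have hgc : ∀ v w, cellFn d (ℓ₁ - 1) r (g v) = cellFn d (ℓ₁ - 1) r (g w) := by
      intro v w
      have h1 := const v.1 v.2
      have h2 := const w.1 w.2
      rw [Fin.eta] at h1 h2
      rw [h1, h2]
    have hginj : Function.Injective g := by
      intro v w e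
      have he : f (Sum.inl ⟨0, v⟩) = f (Sum.inl ⟨0, w⟩) := by rw [hg v, hg w, e]
      have := hf he
      simpa using this
    have hb := inj_bound (by omega : 0 < ℓ₁) g hginj hgc
    rcases le_max_iff.mp hb with h | h <;> omega
  -- each star component must use a K_q vertex
  have starW : ∀ j : Fin q, ∃ v : Fin (a j + 1), ∃ w : Fin q,
      f (Sum.inr ⟨j, v⟩) = Sum.inl w := by
    intro j
    by_contra hcon
    push_neg at hcon
    have hex : ∀ v : Fin (a j + 1), ∃ u, f (Sum.inr ⟨j, v⟩) = Sum.inr u := by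
      intro v
      rcases hfv : f (Sum.inr ⟨j, v⟩) with w | u
      · exact absurd hfv (hcon v w)
      · exact ⟨u, rfl⟩
    choose g hg using hex
    have hgc : ∀ v w, cellFn d (ℓ₁ - 1) r (g v) = cellFn d (ℓ₁ - 1) r (g w) := by
      suffices h0 : ∀ v, cellFn d (ℓ₁ - 1) r (g v) = cellFn d (ℓ₁ - 1) r (g 0) by
        intro v w; rw [h0 v, h0 w]
      intro v
      by_cases hv : v = 0
      · rw [hv]
      · refine cellAdj ?_ (hg v) (hg 0)
        exact Sum.LiftRel.inr ⟨j, v, 0, ⟨hv, Or.inr rfl⟩, rfl, rfl⟩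
    have hginj : Function.Injective g := by
      intro v w e
      have he : f (Sum.inr ⟨j, v⟩) = f (Sum.inr ⟨j, w⟩) := by rw [hg v, hg w, e]
      have := hf he
      simpa using this
    have hb := inj_bound (Nat.succ_pos _) g hginj hgc
    have haj := ha j
    rcases le_max_iff.mp hb with h | h <;> simp [le_max_iff] at haj <;> omega
  choose v0 w0 hw0 using pathW
  choose vs ws hws using starW
  -- pigeonhole: q+1 components, each using a distinct K_q vertex
  have hinj : Function.Injective (fun o : Option (Fin q) => o.elim w0 ws) := by
    intro x y h
    match x, y with
    | none, none => rfl
    | none, some j =>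
      exfalso
      have he : f (Sum.inl ⟨0, v0⟩) = f (Sum.inr ⟨j, vs j⟩) := by
        rw [hw0, hws]; simpa using h
      exact absurd (hf he) (by simp)
    | some j, none =>
      exfalso
      have he : f (Sum.inl ⟨0, v0⟩) = f (Sum.inr ⟨j, vs j⟩) := by
        rw [hw0, hws]; simpa using h.symm
      exact absurd (hf he) (by simp)
    | some j, some j' =>
      have he : f (Sum.inr ⟨j, vs j⟩) = f (Sum.inr ⟨j', vs j'⟩) := by
        rw [hws, hws]; simpa using h
      have := hf he
      simp only [Sum.inr.injEq, Sigma.mk.inj_iff] at this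
      exact congrArg some this.1
  have hcard := Fintype.card_le_of_injective _ hinj
  simp at hcard
end

section
/- Let F = (⋃_{i=1}^p P_{ℓ_i}) ∪ (⋃_{j=1}^q S_{a_j}) be a path-star forest with p ≥ 2, q ≥ 1, a_j ≥ 3 for all j, ℓ_i ≥ 2 for all i, and ℓ_i ≠ 3 for at least one i. Then for every n ≥ q + δ_F + 1, the graph G_1(n, q + δ_F − 1) contains no subgraph isomorphic to F; moreover, if all ℓ_i are odd, then G_1^+(n, q + δ_F − 1) contains no subgraph isomorphic to F. -/
open SimpleGraph Finset

lemma core_count (L : ℕ) (S : Finset ℕ) (hS : ∀ x ∈ S, x < L) :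
    2 * S.card ≤ L + 1 +
      ((Finset.range (L - 1)).filter (fun i => i ∈ S ∧ i + 1 ∈ S)).card := by
  rcases Nat.eq_zero_or_pos L with rfl | hL
  · have hSe : S = ∅ := eq_empty_of_forall_notMem fun x hx => by
      have := hS x hx; omega
    simp [hSe]
  · set A := S.erase (L - 1) with hAdef
    set B := (S.erase 0).image (· - 1) with hBdef
    have hA : A ⊆ range (L - 1) := by
      intro x hx
      have hx1 := Finset.mem_erase.1 hx
      have := hS x hx1.2
      simp only [mem_range]
      omega
    have hB : B ⊆ range (L - 1) := by
      intro x hx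
      obtain ⟨y, hy, rfl⟩ := Finset.mem_image.1 hx
      have hy1 := Finset.mem_erase.1 hy
      have := hS y hy1.2
      have : y ≠ 0 := hy1.1
      simp only [mem_range]
      omega
    have hcA : S.card ≤ A.card + 1 := by
      have hsub : S ⊆ insert (L - 1) A := by
        intro x hx
        rcases eq_or_ne x (L - 1) with rfl | h
        · exact mem_insert_self _ _
        · exact mem_insert_of_mem (mem_erase.2 ⟨h, hx⟩)
      calc S.card ≤ (insert (L - 1) A).card := card_le_card hsub
        _ ≤ A.card + 1 := card_insert_le _ _
    have hcB : S.card ≤ B.card + 1 := by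
      have h1 : B.card = (S.erase 0).card := by
        rw [hBdef]
        apply card_image_of_injOn
        intro x hx y hy hxy
        have hx1 := (mem_erase.1 hx).1
        have hy1 := (mem_erase.1 hy).1
        simp only at hxy
        omega
      have hsub : S ⊆ insert 0 (S.erase 0) := by
        intro x hx
        rcases eq_or_ne x 0 with rfl | h
        · exact mem_insert_self _ _
        · exact mem_insert_of_mem (mem_erase.2 ⟨h, hx⟩)
      calc S.card ≤ (insert 0 (S.erase 0)).card := card_le_card hsub
        _ ≤ (S.erase 0).card + 1 := card_insert_le _ _
        _ = B.card + 1 := by rw [h1]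
    have hI : A ∩ B ⊆ (range (L - 1)).filter (fun i => i ∈ S ∧ i + 1 ∈ S) := by
      intro x hx
      obtain ⟨hxA, hxB⟩ := mem_inter.1 hx
      obtain ⟨y, hy, hyx⟩ := mem_image.1 hxB
      have hy1 := mem_erase.1 hy
      have hxA1 := mem_erase.1 hxA
      have hxL := hS x hxA1.2
      have hyL := hS y hy1.2
      have hyne : y ≠ 0 := hy1.1
      have hyeq : y = x + 1 := by omega
      refine mem_filter.2 ⟨mem_range.2 (by omega), hxA1.2, ?_⟩
      rw [← hyeq]; exact hy1.2
    have hU := Finset.card_union_add_card_inter A B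
    have h1 : (A ∪ B).card ≤ L - 1 := by
      calc (A ∪ B).card ≤ (range (L - 1)).card := card_le_card (union_subset hA hB)
        _ = L - 1 := card_range _
    have h2 : (A ∩ B).card ≤
        ((range (L - 1)).filter (fun i => i ∈ S ∧ i + 1 ∈ S)).card := card_le_card hI
    omega

lemma path_count (L : ℕ) (P : ℕ → Bool) (e : ℕ)
    (hE : ((Finset.range (L - 1)).filter (fun i => ¬ P i ∧ ¬ P (i + 1))).card ≤ e)
    (he : e = 0 ∨ (e = 1 ∧ L % 2 = 1)) :
    L / 2 ≤ ((Finset.range L).filter (fun i => P i)).card := by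
  set S := (range L).filter (fun i => ¬ P i) with hSdef
  have hS : ∀ x ∈ S, x < L := fun x hx => mem_range.1 (mem_filter.1 hx).1
  have hcore := core_count L S hS
  have heq : (range (L - 1)).filter (fun i => i ∈ S ∧ i + 1 ∈ S)
      = (range (L - 1)).filter (fun i => ¬ P i ∧ ¬ P (i + 1)) := by
    apply filter_congr
    intro x hx
    have hx1 := mem_range.1 hx
    simp only [hSdef, mem_filter, mem_range]
    constructor
    · rintro ⟨⟨_, h1⟩, ⟨_, h2⟩⟩; exact ⟨h1, h2⟩
    · rintro ⟨h1, h2⟩; exact ⟨⟨by omega, h1⟩, ⟨by omega, h2⟩⟩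
  rw [heq] at hcore
  have hsplit := Finset.card_filter_add_card_filter_not
    (s := range L) (p := fun i => P i = true)
  rw [card_range] at hsplit
  have hSeq : ((range L).filter (fun i => ¬ (P i = true))).card = S.card := rfl
  omega

lemma count_isLeft_le {W : Type*} [Fintype W] {k : ℕ} {R : Type*} [Fintype R]
    (f : W → Fin k ⊕ R) (hf : Function.Injective f) :
    ((univ : Finset W).filter (fun v => (f v).isLeft)).card ≤ k := by
  have ht : ((univ : Finset (Fin k ⊕ R)).filter (fun x => x.isLeft)).card = k := by
    rw [show (univ : Finset (Fin k ⊕ R)).filter (fun x => x.isLeft)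
        = univ.map ⟨Sum.inl, Sum.inl_injective⟩ from by ext x; cases x <;> simp]
    simp
  calc ((univ : Finset W).filter (fun v => (f v).isLeft)).card
      ≤ ((univ : Finset (Fin k ⊕ R)).filter (fun x => x.isLeft)).card := by
        apply Finset.card_le_card_of_injOn f
        · intro v hv
          exact mem_filter.2 ⟨mem_univ _, (mem_filter.1 hv).2⟩
        · intro x _ y _ h
          exact hf h
    _ = k := ht

lemma psf_adj_path {p q : ℕ} {ℓ : Fin p → ℕ} {a : Fin q → ℕ} {i : Fin p}
    {u v : Fin (ℓ i)} (h : (SimpleGraph.pathGraph (ℓ i)).Adj u v) :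
    (pathStarForest p q ℓ a).Adj (Sum.inl ⟨i, u⟩) (Sum.inl ⟨i, v⟩) :=
  Sum.LiftRel.inl ⟨i, u, v, h, rfl, rfl⟩

lemma psf_adj_star {p q : ℕ} {ℓ : Fin p → ℕ} {a : Fin q → ℕ} {j : Fin q}
    {u v : Fin (a j + 1)} (h : (_root_.starGraph (a j)).Adj u v) :
    (pathStarForest p q ℓ a).Adj (Sum.inr ⟨j, u⟩) (Sum.inr ⟨j, v⟩) :=
  Sum.LiftRel.inr ⟨j, u, v, h, rfl, rfl⟩

lemma joinG_adj_inr_inr {α β : Type*} {G : SimpleGraph α} {H : SimpleGraph β}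
    {u v : β} (h : (joinG G H).Adj (Sum.inr u) (Sum.inr v)) : H.Adj u v := h

lemma master {p q k : ℕ} {ℓ : Fin p → ℕ} {a : Fin q → ℕ} {R : Type*} [Fintype R]
    {GR : SimpleGraph R}
    (f : (pathStarForest p q ℓ a) →g joinG (⊤ : SimpleGraph (Fin k)) GR)
    (hf : Function.Injective f)
    (hpath : ∀ i : Fin p, ℓ i / 2 ≤
      ((univ : Finset (Fin (ℓ i))).filter (fun x => (f (Sum.inl ⟨i, x⟩)).isLeft)).card)
    (hstar : ∀ j : Fin q, ∃ y : Fin (a j + 1), (f (Sum.inr ⟨j, y⟩)).isLeft)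
    (hk : k < q + deltaF p ℓ) : False := by
  have hle := count_isLeft_le f hf
  have hdecomp : ((univ : Finset ((Σ i, Fin (ℓ i)) ⊕ (Σ j, Fin (a j + 1)))).filter
        (fun v => (f v).isLeft)).card
      = (∑ i : Fin p, ((univ : Finset (Fin (ℓ i))).filter
            (fun x => (f (Sum.inl ⟨i, x⟩)).isLeft)).card)
        + ∑ j : Fin q, ((univ : Finset (Fin (a j + 1))).filter
            (fun y => (f (Sum.inr ⟨j, y⟩)).isLeft)).card := by
    rw [Finset.card_filter, Fintype.sum_sum_type]
    congr 1
    · rw [← Finset.univ_sigma_univ, Finset.sum_sigma]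
      exact Finset.sum_congr rfl fun i _ => (Finset.card_filter _ _).symm
    · rw [← Finset.univ_sigma_univ, Finset.sum_sigma]
      exact Finset.sum_congr rfl fun j _ => (Finset.card_filter _ _).symm
  have h1 : deltaF p ℓ ≤ ∑ i : Fin p, ((univ : Finset (Fin (ℓ i))).filter
      (fun x => (f (Sum.inl ⟨i, x⟩)).isLeft)).card :=
    Finset.sum_le_sum fun i _ => hpath i
  have h2 : q ≤ ∑ j : Fin q, ((univ : Finset (Fin (a j + 1))).filter
      (fun y => (f (Sum.inr ⟨j, y⟩)).isLeft)).card := by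
    calc q = ∑ _j : Fin q, 1 := by simp
      _ ≤ _ := Finset.sum_le_sum fun j _ => by
          obtain ⟨y, hy⟩ := hstar j
          exact Finset.card_pos.2 ⟨y, mem_filter.2 ⟨mem_univ _, hy⟩⟩
  omega

theorem g1_is_free (p q : ℕ) (ℓ : Fin p → ℕ) (a : Fin q → ℕ)
    (hp : 2 ≤ p) (hq : 1 ≤ q) (ha : ∀ j, 3 ≤ a j) (hℓ : ∀ i, 2 ≤ ℓ i)
    (hne3 : ∃ i, ℓ i ≠ 3) :
    ∀ n : ℕ, q + deltaF p ℓ + 1 ≤ n →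
      IsFree (pathStarForest p q ℓ a) (g1 n (q + deltaF p ℓ - 1)) ∧
      ((∀ i, Odd (ℓ i)) →
        IsFree (pathStarForest p q ℓ a) (g1plus n (q + deltaF p ℓ - 1))) := by
  intro n hn
  set k := q + deltaF p ℓ - 1 with hkdef
  have hklt : k < q + deltaF p ℓ := by
    have : 1 ≤ q + deltaF p ℓ := by omega
    omega
  constructor
  · rintro ⟨f, hf⟩
    apply master f hf ?_ ?_ hklt
    · -- paths
      intro i
      set L := ℓ i with hL
      set P : ℕ → Bool := fun m =>
        if h : m < L then (f (Sum.inl ⟨i, ⟨m, h⟩⟩)).isLeft else true with hP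
      have hPQ : ∀ x : Fin L, P ↑x = (f (Sum.inl ⟨i, x⟩)).isLeft := by
        intro x
        simp only [hP, dif_pos x.isLt, Fin.eta]
      have hcards : ((univ : Finset (Fin L)).filter
            (fun x => (f (Sum.inl ⟨i, x⟩)).isLeft)).card
          = ((range L).filter (fun m => P m)).card := by
        rw [Finset.card_filter, Finset.card_filter,
          ← Fin.sum_univ_eq_sum_range (fun m => if P m then 1 else 0) L]
        exact Finset.sum_congr rfl fun x _ => by rw [hPQ x]
      refine le_of_le_of_eq ?_ hcards.symm
      apply path_count L P 0 ?_ (Or.inl rfl)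
      have : ((range (L - 1)).filter (fun m => ¬ P m ∧ ¬ P (m + 1))) = ∅ := by
        rw [Finset.filter_eq_empty_iff]
        intro m hm
        rintro ⟨h1, h2⟩
        have hm1 : m < L - 1 := mem_range.1 hm
        have hmL : m < L := by omega
        have hm2 : m + 1 < L := by omega
        rw [hP] at h1 h2
        simp only [dif_pos hmL] at h1
        simp only [dif_pos hm2] at h2
        obtain ⟨u, hu⟩ := Sum.isRight_iff.1 (Sum.not_isLeft.1 h1)
        obtain ⟨v, hv⟩ := Sum.isRight_iff.1 (Sum.not_isLeft.1 h2)
        have hadj : (SimpleGraph.pathGraph L).Adj ⟨m, hmL⟩ ⟨m + 1, hm2⟩ := by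
          rw [SimpleGraph.pathGraph_adj]
          left
          rfl
        have h3 := f.map_adj (psf_adj_path (a := a) hadj)
        rw [hu, hv] at h3
        exact joinG_adj_inr_inr h3
      rw [this]
      simp
    · -- stars
      intro j
      have h2a : (2 : ℕ) ≤ a j + 1 := by have := ha j; omega
      set z0 : Fin (a j + 1) := ⟨0, by omega⟩ with hz0
      set z1 : Fin (a j + 1) := ⟨1, by have := ha j; omega⟩ with hz1
      have hadj : (_root_.starGraph (a j)).Adj z0 z1 := by
        refine ⟨?_, Or.inl ?_⟩
        · intro h
          have := congrArg Fin.val h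
          simp [hz0, hz1] at this
        · ext
          simp [hz0]
      have h3 := f.map_adj (psf_adj_star (ℓ := ℓ) hadj)
      by_cases hc0 : (f (Sum.inr ⟨j, z0⟩)).isLeft
      · exact ⟨z0, hc0⟩
      by_cases hc1 : (f (Sum.inr ⟨j, z1⟩)).isLeft
      · exact ⟨z1, hc1⟩
      exfalso
      obtain ⟨u, hu⟩ := Sum.isRight_iff.1 (Sum.not_isLeft.1 hc0)
      obtain ⟨v, hv⟩ := Sum.isRight_iff.1 (Sum.not_isLeft.1 hc1)
      rw [hu, hv] at h3
      exact joinG_adj_inr_inr h3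
  · intro hodd
    rintro ⟨f, hf⟩
    apply master f hf ?_ ?_ hklt
    · -- paths
      intro i
      set L := ℓ i with hL
      set P : ℕ → Bool := fun m =>
        if h : m < L then (f (Sum.inl ⟨i, ⟨m, h⟩⟩)).isLeft else true with hP
      have hPQ : ∀ x : Fin L, P ↑x = (f (Sum.inl ⟨i, x⟩)).isLeft := by
        intro x
        simp only [hP, dif_pos x.isLt, Fin.eta]
      have hcards : ((univ : Finset (Fin L)).filter
            (fun x => (f (Sum.inl ⟨i, x⟩)).isLeft)).card
          = ((range L).filter (fun m => P m)).card := by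
        rw [Finset.card_filter, Finset.card_filter,
          ← Fin.sum_univ_eq_sum_range (fun m => if P m then 1 else 0) L]
        exact Finset.sum_congr rfl fun x _ => by rw [hPQ x]
      refine le_of_le_of_eq ?_ hcards.symm
      have hLodd : L % 2 = 1 := Nat.odd_iff.1 (hodd i)
      apply path_count L P 1 ?_ (Or.inr ⟨rfl, hLodd⟩)
      -- the bad set has at most one element
      have hbad : ∀ m (hm1 : m < L) (hm2 : m + 1 < L),
          ¬ P m → ¬ P (m + 1) →
          (∃ c : Fin 2, f (Sum.inl ⟨i, ⟨m, hm1⟩⟩) = Sum.inr (Sum.inl c)) ∧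
          (∃ c : Fin 2, f (Sum.inl ⟨i, ⟨m + 1, hm2⟩⟩) = Sum.inr (Sum.inl c)) ∧
          ∀ c c' : Fin 2, f (Sum.inl ⟨i, ⟨m, hm1⟩⟩) = Sum.inr (Sum.inl c) →
            f (Sum.inl ⟨i, ⟨m + 1, hm2⟩⟩) = Sum.inr (Sum.inl c') → c ≠ c' := by
        intro m hm1 hm2 h1 h2
        rw [hP] at h1 h2
        simp only [dif_pos hm1] at h1
        simp only [dif_pos hm2] at h2
        obtain ⟨u, hu⟩ := Sum.isRight_iff.1 (Sum.not_isLeft.1 h1)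
        obtain ⟨v, hv⟩ := Sum.isRight_iff.1 (Sum.not_isLeft.1 h2)
        have hadj : (SimpleGraph.pathGraph L).Adj ⟨m, hm1⟩ ⟨m + 1, hm2⟩ := by
          rw [SimpleGraph.pathGraph_adj]
          left
          rfl
        have h3 := f.map_adj (psf_adj_path (a := a) hadj)
        rw [hu, hv] at h3
        have h4 : (dUnion (⊤ : SimpleGraph (Fin 2))
            (⊥ : SimpleGraph (Fin (n - k - 2)))).Adj u v := joinG_adj_inr_inr h3
        cases h4 with
        | inl h5 =>
          rename_i u' v'
          refine ⟨⟨u', by rw [hu]⟩, ⟨v', by rw [hv]⟩, ?_⟩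
          intro c c' hc hc' hcc
          rw [hu] at hc
          rw [hv] at hc'
          have hc2 : u' = c := by
            have := Sum.inr_injective hc
            exact Sum.inl_injective this
          have hc2' : v' = c' := by
            have := Sum.inr_injective hc'
            exact Sum.inl_injective this
          exact h5.ne (by rw [hc2, hc2', hcc])
        | inr h5 => exact absurd h5 (by simp)
      apply Finset.card_le_one.2
      intro m₁ hm₁ m₂ hm₂
      by_contra hne
      obtain ⟨hm₁r, h11, h12⟩ := mem_filter.1 hm₁
      obtain ⟨hm₂r, h21, h22⟩ := mem_filter.1 hm₂
      have hm₁L : m₁ + 1 < L := by have := mem_range.1 hm₁r; omega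
      have hm₂L : m₂ + 1 < L := by have := mem_range.1 hm₂r; omega
      -- key: for m₁ < m₂ derive False
      have key : ∀ m m' (h : m < m') (hmL : m + 1 < L) (hm'L : m' + 1 < L),
          (¬ P m) → (¬ P (m + 1)) → (¬ P m') → (¬ P (m' + 1)) → False := by
        intro m m' hlt hmL hm'L q1 q2 q3 q4
        have hm0 : m < L := by omega
        have hm'0 : m' < L := by omega
        obtain ⟨⟨c0, hc0⟩, ⟨c1, hc1⟩, hne01⟩ := hbad m hm0 hmL q1 q2
        have hne01' := hne01 c0 c1 hc0 hc1
        -- pick a vertex index m'' ∈ {m', m'+1} with m'' ∉ {m, m+1}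
        obtain ⟨m'', hm''L, hm''ne, c2, hc2⟩ :
            ∃ m'', ∃ hm''L : m'' < L, (m'' ≠ m ∧ m'' ≠ m + 1) ∧
              ∃ c : Fin 2, f (Sum.inl ⟨i, ⟨m'', hm''L⟩⟩) = Sum.inr (Sum.inl c) := by
          rcases eq_or_ne m' (m + 1) with heq | hne'
          · obtain ⟨_, ⟨c, hc⟩, _⟩ := hbad m' hm'0 hm'L q3 q4
            exact ⟨m' + 1, hm'L, ⟨by omega, by omega⟩, c, hc⟩
          · obtain ⟨⟨c, hc⟩, _, _⟩ := hbad m' hm'0 hm'L q3 q4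
            exact ⟨m', hm'0, ⟨by omega, by omega⟩, c, hc⟩
        -- c2 equals c0 or c1
        have hor : c2 = c0 ∨ c2 = c1 := by
          have h0 := c0.isLt
          have h1 := c1.isLt
          have h2 := c2.isLt
          have hv : (c0 : ℕ) ≠ (c1 : ℕ) := fun h => hne01' (Fin.ext h)
          have : (c2 : ℕ) = (c0 : ℕ) ∨ (c2 : ℕ) = (c1 : ℕ) := by omega
          rcases this with h | h
          · exact Or.inl (Fin.ext h)
          · exact Or.inr (Fin.ext h)
        rcases hor with h | h
        · rw [h, ← hc0] at hc2
          have heq2 := hf hc2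
          simp only [Sum.inl.injEq, Sigma.mk.inj_iff, heq_eq_eq, true_and,
            Fin.mk.injEq] at heq2
          exact hm''ne.1 heq2
        · rw [h, ← hc1] at hc2
          have heq2 := hf hc2
          simp only [Sum.inl.injEq, Sigma.mk.inj_iff, heq_eq_eq, true_and,
            Fin.mk.injEq] at heq2
          exact hm''ne.2 heq2
      rcases lt_trichotomy m₁ m₂ with h | h | h
      · exact key m₁ m₂ h hm₁L hm₂L h11 h12 h21 h22
      · exact hne h
      · exact key m₂ m₁ h hm₂L hm₁L h21 h22 h11 h12
    · -- stars
      intro j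
      have h2a : (2 : ℕ) ≤ a j + 1 := by have := ha j; omega
      set z0 : Fin (a j + 1) := ⟨0, by omega⟩ with hz0
      set z1 : Fin (a j + 1) := ⟨1, by have := ha j; omega⟩ with hz1
      set z2 : Fin (a j + 1) := ⟨2, by have := ha j; omega⟩ with hz2
      have hadj01 : (_root_.starGraph (a j)).Adj z0 z1 := by
        refine ⟨?_, Or.inl ?_⟩
        · intro h
          have := congrArg Fin.val h
          simp [hz0, hz1] at this
        · ext
          simp [hz0]
      have hadj02 : (_root_.starGraph (a j)).Adj z0 z2 := by
        refine ⟨?_, Or.inl ?_⟩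
        · intro h
          have := congrArg Fin.val h
          simp [hz0, hz2] at this
        · ext
          simp [hz0]
      by_cases hc0 : (f (Sum.inr ⟨j, z0⟩)).isLeft
      · exact ⟨z0, hc0⟩
      by_cases hc1 : (f (Sum.inr ⟨j, z1⟩)).isLeft
      · exact ⟨z1, hc1⟩
      by_cases hc2 : (f (Sum.inr ⟨j, z2⟩)).isLeft
      · exact ⟨z2, hc2⟩
      exfalso
      obtain ⟨u, hu⟩ := Sum.isRight_iff.1 (Sum.not_isLeft.1 hc0)
      obtain ⟨v, hv⟩ := Sum.isRight_iff.1 (Sum.not_isLeft.1 hc1)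
      obtain ⟨w, hw⟩ := Sum.isRight_iff.1 (Sum.not_isLeft.1 hc2)
      have h3 := f.map_adj (psf_adj_star (ℓ := ℓ) hadj01)
      have h4 := f.map_adj (psf_adj_star (ℓ := ℓ) hadj02)
      rw [hu, hv] at h3
      rw [hu, hw] at h4
      have h3' := joinG_adj_inr_inr h3
      have h4' := joinG_adj_inr_inr h4
      cases h3' with
      | inr h5 => exact absurd h5 (by simp)
      | inl hab =>
        rename_i u0 v0
        cases h4' with
        | inl hac =>
          rename_i w0
          have hbc : v0 = w0 := by
            have h0 := u0.isLt
            have h1 := v0.isLt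
            have h2 := w0.isLt
            have e1 : (u0 : ℕ) ≠ (v0 : ℕ) := fun h => hab.ne (Fin.ext h)
            have e2 : (u0 : ℕ) ≠ (w0 : ℕ) := fun h => hac.ne (Fin.ext h)
            exact Fin.ext (by omega)
          rw [hbc] at hv
          have hzz : z1 = z2 := by
            have h5 := hf (hv.trans hw.symm)
            simpa using h5
          have := congrArg Fin.val hzz
          rw [hz1, hz2] at this
          simp at this
end

section
/- Let F = pP_3 ∪ (⋃_{j=1}^q S_{a_j}) with p ≥ 2, q ≥ 1, and a_j ≥ 3 for all j. Then for every n ≥ p + q − 1, the graph K_{p+q−1} ∨ M_{n−p−q+1} contains no subgraph isomorphic to F. -/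
open SimpleGraph Finset

theorem join_matching_is_free (p q n : ℕ) (a : Fin q → ℕ)
    (hp : 2 ≤ p) (hq : 1 ≤ q) (ha : ∀ j, 3 ≤ a j) (hn : p + q - 1 ≤ n) :
    IsFree (pathStarForest p q (fun _ => 3) a)
      (joinG (⊤ : SimpleGraph (Fin (p + q - 1)))
        (matchingGraph (n - (p + q - 1)))) := by
  rintro ⟨f, hf⟩
  -- in the matching graph, a vertex has at most one neighbor
  have muniq : ∀ x y m : Fin (n - (p + q - 1)),
      (matchingGraph (n - (p + q - 1))).Adj x m →
      (matchingGraph (n - (p + q - 1))).Adj y m → x = y := by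
    rintro x y m ⟨hx1, hx2⟩ ⟨hy1, hy2⟩
    have h1 : (x : ℕ) ≠ (m : ℕ) := fun h => hx1 (Fin.ext h)
    have h2 : (y : ℕ) ≠ (m : ℕ) := fun h => hy1 (Fin.ext h)
    exact Fin.ext (by omega)
  -- a path u - v - w in F must have some vertex mapped into the clique
  have triple : ∀ u v w, (pathStarForest p q (fun _ => 3) a).Adj v u →
      (pathStarForest p q (fun _ => 3) a).Adj v w → u ≠ w →
      ∃ x, (x = u ∨ x = v ∨ x = w) ∧ ∃ m : Fin (p + q - 1), f x = Sum.inl m := by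
    intro u v w hvu hvw huw
    cases hfv : f v with
    | inl m => exact ⟨v, Or.inr (Or.inl rfl), m, hfv⟩
    | inr mv =>
      cases hfu : f u with
      | inl m => exact ⟨u, Or.inl rfl, m, hfu⟩
      | inr mu =>
        cases hfw : f w with
        | inl m => exact ⟨w, Or.inr (Or.inr rfl), m, hfw⟩
        | inr mw =>
          exfalso
          have h1 := f.map_adj hvu
          have h2 := f.map_adj hvw
          rw [hfv, hfu] at h1
          rw [hfv, hfw] at h2
          have hadj1 : (matchingGraph (n - (p + q - 1))).Adj mu mv := h1.symm
          have hadj2 : (matchingGraph (n - (p + q - 1))).Adj mw mv := h2.symm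
          have hmm : mu = mw := muniq mu mw mv hadj1 hadj2
          exact huw (hf (by rw [hfu, hfw, hmm]))
  -- every component has a vertex mapped into the clique
  have key : ∀ c : Fin p ⊕ Fin q, ∃ x, ∃ m : Fin (p + q - 1),
      Sum.map Sigma.fst Sigma.fst x = c ∧ f x = Sum.inl m := by
    rintro (i | j)
    · have h01 : (pathStarForest p q (fun _ => 3) a).Adj (Sum.inl ⟨i, 1⟩) (Sum.inl ⟨i, 0⟩) :=
        Sum.LiftRel.inl ⟨i, 1, 0, by simp [SimpleGraph.pathGraph_adj], rfl, rfl⟩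
      have h12 : (pathStarForest p q (fun _ => 3) a).Adj (Sum.inl ⟨i, 1⟩) (Sum.inl ⟨i, 2⟩) :=
        Sum.LiftRel.inl ⟨i, 1, 2, by simp [SimpleGraph.pathGraph_adj], rfl, rfl⟩
      obtain ⟨x, hx, m, hm⟩ := triple _ _ _ h01 h12 (by simp)
      refine ⟨x, m, ?_, hm⟩
      rcases hx with rfl | rfl | rfl <;> rfl
    · have haj := ha j
      have h1lt : 1 < a j + 1 := by omega
      have h2lt : 2 < a j + 1 := by omega
      have h01 : (pathStarForest p q (fun _ => 3) a).Adj
          (Sum.inr ⟨j, 0⟩) (Sum.inr ⟨j, ⟨1, h1lt⟩⟩) :=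
        Sum.LiftRel.inr ⟨j, 0, ⟨1, h1lt⟩, ⟨by simp [Fin.ext_iff], Or.inl rfl⟩, rfl, rfl⟩
      have h02 : (pathStarForest p q (fun _ => 3) a).Adj
          (Sum.inr ⟨j, 0⟩) (Sum.inr ⟨j, ⟨2, h2lt⟩⟩) :=
        Sum.LiftRel.inr ⟨j, 0, ⟨2, h2lt⟩, ⟨by simp [Fin.ext_iff], Or.inl rfl⟩, rfl, rfl⟩
      obtain ⟨x, hx, m, hm⟩ := triple _ _ _ h01 h02 (by simp [Fin.ext_iff])
      refine ⟨x, m, ?_, hm⟩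
      rcases hx with rfl | rfl | rfl <;> rfl
  choose x m hcomp hm using key
  have hinj : Function.Injective m := by
    intro c c' h
    have hxx : x c = x c' := hf (by rw [hm c, hm c', h])
    rw [← hcomp c, ← hcomp c', hxx]
  have hcard := Fintype.card_le_of_injective m hinj
  simp only [Fintype.card_sum, Fintype.card_fin] at hcard
  omega
end
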